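/- arXiv:1610.07830 — 3 statements merged into one kernel-verified Lean document; each statement's English description precedes it below -/
import Mathlib

section
/- Let p be a positive integer, let g, h : ℝ^p → ℝ be convex, let f : ℝ^p → ℝ be convex and L-smooth with L > 0, and let 0 < γ < 2/L. Let y* ∈ ℝ^p be a fixed point, i.e., there is x* ∈ ℝ^p such that x* is a proximal point of g at y* with parameter γ and x* is a proximal point of h at 2x* − y* − γ∇f(x*) with parameter γ. Let sequences (y_k), (x_k), (z_k) in ℝ^p satisfy, for every k ≥ 0: (x_k, z_k) is a three-operator splitting step from y_k, and y_{k+1} = y_k − x_k + z_k. Then with G_k = (x_k − z_k)/γ, for every integer k ≥ 0 one has ‖G_k‖² ≤ 2‖y_0 − y*‖² / (γ²(2 − γL)(k + 1)). -/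
open RealInnerProductSpace

/-- `x` is a proximal point of `φ` at `y` with parameter `γ`:
it minimizes `u ↦ φ u + (1/(2γ)) ‖u - y‖²`. -/
def IsProxPt {p : ℕ} (γ : ℝ) (φ : EuclideanSpace ℝ (Fin p) → ℝ)
    (y x : EuclideanSpace ℝ (Fin p)) : Prop :=
  ∀ u : EuclideanSpace ℝ (Fin p),
    φ x + (1 / (2 * γ)) * ‖x - y‖ ^ 2 ≤ φ u + (1 / (2 * γ)) * ‖u - y‖ ^ 2

/-- `(x, z)` is a three-operator splitting step from `y`. -/
def IsSplitStep {p : ℕ} (γ : ℝ) (g h f : EuclideanSpace ℝ (Fin p) → ℝ)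
    (y x z : EuclideanSpace ℝ (Fin p)) : Prop :=
  IsProxPt γ g y x ∧ IsProxPt γ h ((2 : ℝ) • x - y - γ • gradient f x) z

/-- `f` is `L`-smooth: differentiable with `L`-Lipschitz gradient. -/
def LSmooth {p : ℕ} (L : ℝ) (f : EuclideanSpace ℝ (Fin p) → ℝ) : Prop :=
  Differentiable ℝ f ∧ ∀ a b : EuclideanSpace ℝ (Fin p),
    ‖gradient f a - gradient f b‖ ≤ L * ‖a - b‖

/-- `u` is a subgradient of `φ` at `x`. -/
def IsSubgradient {p : ℕ} (φ : EuclideanSpace ℝ (Fin p) → ℝ)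
    (x u : EuclideanSpace ℝ (Fin p)) : Prop :=
  ∀ w : EuclideanSpace ℝ (Fin p), φ w ≥ φ x + ⟪u, w - x⟫

variable {p : ℕ}
local notation "E" => EuclideanSpace ℝ (Fin p)

lemma hasDerivAt_line (f : E → ℝ) (hd : Differentiable ℝ f) (a d : E) (t : ℝ) :
    HasDerivAt (fun s : ℝ => f (a + s • d)) ⟪gradient f (a + t • d), d⟫ t := by
  have h1 : HasFDerivAt f (InnerProductSpace.toDual ℝ _ (gradient f (a + t • d))) (a + t • d) :=
    (hd _).hasGradientAt.hasFDerivAt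
  have h2 : HasDerivAt (fun s : ℝ => a + s • d) d t := by
    simpa using ((hasDerivAt_id t).smul_const d).const_add a
  have h3 := h1.comp_hasDerivAt t h2
  exact h3

lemma grad_subgrad (f : E → ℝ) (hf : ConvexOn ℝ Set.univ f) (hd : Differentiable ℝ f)
    (x : E) : IsSubgradient f x (gradient f x) := by
  intro w
  set d := w - x with hdd
  have hder : HasDerivAt (fun s : ℝ => f (x + s • d)) ⟪gradient f x, d⟫ 0 := by
    simpa using hasDerivAt_line f hd x d 0
  have hslope : Filter.Tendsto (slope (fun s : ℝ => f (x + s • d)) 0) (nhdsWithin 0 (Set.Ioi 0))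
      (nhds ⟪gradient f x, d⟫) :=
    (hasDerivAt_iff_tendsto_slope.1 hder).mono_left
      (nhdsWithin_mono _ (fun t ht => ne_of_gt ht))
  have hev : ∀ᶠ t in nhdsWithin (0:ℝ) (Set.Ioi 0),
      slope (fun s : ℝ => f (x + s • d)) 0 t ≤ f w - f x := by
    filter_upwards [Ioc_mem_nhdsGT one_pos] with t ht
    have heq : x + t • d = (1 - t) • x + t • w := by
      rw [hdd]; module
    have hconv := hf.2 (Set.mem_univ x) (Set.mem_univ w)
      (by linarith [ht.2] : (0:ℝ) ≤ 1 - t) ht.1.le (by ring)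
    rw [slope_def_field]
    simp only [sub_zero, zero_smul, add_zero, heq]
    rw [div_le_iff₀ ht.1]
    simp only [smul_eq_mul] at hconv
    nlinarith [hconv]
  have hlim := le_of_tendsto hslope hev
  linarith

lemma descent_lemma {L : ℝ} (hL : 0 < L) (f : E → ℝ) (hfL : LSmooth L f) (a b : E) :
    f b ≤ f a + ⟪gradient f a, b - a⟫ + L / 2 * ‖b - a‖ ^ 2 := by
  set d := b - a with hdd
  set ψ : ℝ → ℝ := fun t => f (a + t • d) - t * ⟪gradient f a, d⟫ - L / 2 * t ^ 2 * ‖d‖ ^ 2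
    with hψdef
  have hψ : ∀ t : ℝ, HasDerivAt ψ
      (⟪gradient f (a + t • d), d⟫ - ⟪gradient f a, d⟫ - L * t * ‖d‖ ^ 2) t := by
    intro t
    have h1 := hasDerivAt_line f hfL.1 a d t
    have h2 : HasDerivAt (fun s : ℝ => s * ⟪gradient f a, d⟫) ⟪gradient f a, d⟫ t := by
      simpa using (hasDerivAt_id t).mul_const (⟪gradient f a, d⟫ : ℝ)
    have h3 : HasDerivAt (fun s : ℝ => L / 2 * s ^ 2 * ‖d‖ ^ 2) (L * t * ‖d‖ ^ 2) t := by
      have := ((hasDerivAt_pow 2 t).const_mul (L / 2)).mul_const (‖d‖ ^ 2)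
      refine this.congr_deriv ?_
      rw [show (2:ℕ) - 1 = 1 from rfl]; push_cast
      ring
    exact (h1.sub h2).sub h3
  have hanti : AntitoneOn ψ (Set.Icc 0 1) := by
    apply antitoneOn_of_deriv_nonpos (convex_Icc 0 1)
    · exact fun t _ => ((hψ t).continuousAt).continuousWithinAt
    · exact fun t _ => ((hψ t).differentiableAt).differentiableWithinAt
    · intro t ht
      rw [interior_Icc] at ht
      rw [(hψ t).deriv]
      have hlip := hfL.2 (a + t • d) a
      have hnorm : ‖a + t • d - a‖ = t * ‖d‖ := by
        simp [norm_smul, abs_of_nonneg ht.1.le]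
      rw [hnorm] at hlip
      have hcs : ⟪gradient f (a + t • d) - gradient f a, d⟫ ≤
          ‖gradient f (a + t • d) - gradient f a‖ * ‖d‖ := real_inner_le_norm _ _
      rw [inner_sub_left] at hcs
      nlinarith [norm_nonneg d, norm_nonneg (gradient f (a + t • d) - gradient f a)]
  have h01 := hanti (Set.left_mem_Icc.2 zero_le_one) (Set.right_mem_Icc.2 zero_le_one)
    zero_le_one
  have he : a + (1:ℝ) • d = b := by rw [hdd]; module
  simp only [hψdef, he, zero_smul, add_zero, one_pow, zero_pow, mul_zero, zero_mul,
    mul_one, one_mul, sub_zero] at h01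
  linarith

lemma lower_bound {L : ℝ} (hL : 0 < L) (f : E → ℝ) (hf : ConvexOn ℝ Set.univ f)
    (hfL : LSmooth L f) (a b : E) :
    f a + ⟪gradient f a, b - a⟫ + 1 / (2 * L) * ‖gradient f b - gradient f a‖ ^ 2 ≤ f b := by
  set Δ := gradient f b - gradient f a with hΔ
  set w := b - L⁻¹ • Δ with hw
  have h1 := descent_lemma hL f hfL b w
  have h2 := grad_subgrad f hf hfL.1 a w
  have e1 : w - b = -(L⁻¹ • Δ) := by rw [hw]; module
  have e2 : ⟪gradient f b, w - b⟫ = -(L⁻¹ * ⟪gradient f b, Δ⟫) := by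
    rw [e1, inner_neg_right, real_inner_smul_right]
  have e3 : ‖w - b‖ ^ 2 = L⁻¹ ^ 2 * ‖Δ‖ ^ 2 := by
    rw [e1, norm_neg, norm_smul]
    simp [abs_of_nonneg (inv_nonneg.2 hL.le), mul_pow]
  have e4 : ⟪gradient f a, w - a⟫ = ⟪gradient f a, b - a⟫ - L⁻¹ * ⟪gradient f a, Δ⟫ := by
    have : w - a = (b - a) - L⁻¹ • Δ := by rw [hw]; module
    rw [this, inner_sub_right, real_inner_smul_right]
  have e5 : ⟪gradient f b, Δ⟫ - ⟪gradient f a, Δ⟫ = ‖Δ‖ ^ 2 := by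
    rw [← inner_sub_left, ← hΔ, real_inner_self_eq_norm_sq]
  rw [e2, e3] at h1
  rw [e4] at h2
  have e7 : L / 2 * (L⁻¹ ^ 2 * ‖Δ‖ ^ 2) = 1 / (2 * L) * ‖Δ‖ ^ 2 := by
    field_simp
  have e9 : L⁻¹ * ⟪gradient f b, Δ⟫ - L⁻¹ * ⟪gradient f a, Δ⟫ = L⁻¹ * ‖Δ‖ ^ 2 := by
    rw [← mul_sub, e5]
  have e8 : L⁻¹ * ‖Δ‖ ^ 2 = 2 * (1 / (2 * L) * ‖Δ‖ ^ 2) := by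
    field_simp
  linarith

lemma cocoercive {L : ℝ} (hL : 0 < L) (f : E → ℝ) (hf : ConvexOn ℝ Set.univ f)
    (hfL : LSmooth L f) (a b : E) :
    1 / L * ‖gradient f a - gradient f b‖ ^ 2 ≤ ⟪gradient f a - gradient f b, a - b⟫ := by
  have h1 := lower_bound hL f hf hfL a b
  have h2 := lower_bound hL f hf hfL b a
  have e1 : ‖gradient f a - gradient f b‖ = ‖gradient f b - gradient f a‖ := norm_sub_rev _ _
  have e2 : ⟪gradient f a - gradient f b, a - b⟫
      = -(⟪gradient f a, b - a⟫ + ⟪gradient f b, a - b⟫) := by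
    simp only [inner_sub_left, inner_sub_right]
    ring
  rw [e1, e2]
  have e3 : (1:ℝ) / L * ‖gradient f b - gradient f a‖ ^ 2
      = 2 * (1 / (2 * L) * ‖gradient f b - gradient f a‖ ^ 2) := by
    field_simp
  rw [e3]
  have e4 : ‖gradient f a - gradient f b‖ ^ 2 = ‖gradient f b - gradient f a‖ ^ 2 := by
    rw [e1]
  rw [e4] at h2
  linarith

lemma prox_subgrad {γ : ℝ} (hγ : 0 < γ) (φ : E → ℝ) (hφ : ConvexOn ℝ Set.univ φ)
    {y x : E} (hpx : IsProxPt γ φ y x) : IsSubgradient φ x (γ⁻¹ • (y - x)) := by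
  intro w
  rw [ge_iff_le, real_inner_smul_left]
  set d := w - x with hdd
  set C := φ w - φ x - γ⁻¹ * ⟪y - x, d⟫ with hC
  have key : ∀ t : ℝ, 0 < t → t ≤ 1 → 0 ≤ C + t / (2 * γ) * ‖d‖ ^ 2 := by
    intro t ht0 ht1
    have hmin := hpx (x + t • d)
    have heq : x + t • d = (1 - t) • x + t • w := by rw [hdd]; module
    have hconv := hφ.2 (Set.mem_univ x) (Set.mem_univ w)
      (by linarith : (0:ℝ) ≤ 1 - t) ht0.le (by ring)
    rw [← heq] at hconv
    simp only [smul_eq_mul] at hconv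
    have hexp : ‖x + t • d - y‖ ^ 2
        = ‖x - y‖ ^ 2 + 2 * (t * ⟪x - y, d⟫) + t ^ 2 * ‖d‖ ^ 2 := by
      have e : x + t • d - y = (x - y) + t • d := by module
      rw [e, norm_add_sq_real, real_inner_smul_right, norm_smul]
      simp [abs_of_nonneg ht0.le, mul_pow]
    have hiyx : ⟪y - x, d⟫ = -⟪x - y, d⟫ := by
      rw [← inner_neg_left]; congr 1; module
    have H : 0 ≤ t * (φ w - φ x) + 1 / (2 * γ) * (2 * (t * ⟪x - y, d⟫) + t ^ 2 * ‖d‖ ^ 2) := by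
      have := hmin.trans (by linarith [hconv] :
        φ (x + t • d) + 1 / (2 * γ) * ‖x + t • d - y‖ ^ 2
          ≤ (1 - t) * φ x + t * φ w + 1 / (2 * γ) * ‖x + t • d - y‖ ^ 2)
      rw [hexp] at this
      nlinarith [this]
    have hγ' : (0:ℝ) < 2 * γ := by linarith
    rw [hC, hiyx]
    have Ht : 0 ≤ t * (C + t / (2 * γ) * ‖d‖ ^ 2) + t * (γ⁻¹ * ⟪y - x, d⟫ + γ⁻¹ * ⟪x - y, d⟫) := by
      have e0 : t * (C + t / (2 * γ) * ‖d‖ ^ 2) + t * (γ⁻¹ * ⟪y - x, d⟫ + γ⁻¹ * ⟪x - y, d⟫)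
          = t * (φ w - φ x) + 1 / (2 * γ) * (2 * (t * ⟪x - y, d⟫) + t ^ 2 * ‖d‖ ^ 2) := by
        rw [hC, hiyx]
        field_simp
        ring
      rw [e0]; exact H
    have e1 : γ⁻¹ * ⟪y - x, d⟫ + γ⁻¹ * ⟪x - y, d⟫ = 0 := by rw [hiyx]; ring
    rw [e1, mul_zero, add_zero] at Ht
    have := (mul_nonneg_iff_of_pos_left ht0).1 Ht
    rw [hC, hiyx] at this
    exact this
  by_contra hcon
  push_neg at hcon
  have hCneg : C < 0 := by rw [hC]; linarith
  set t0 : ℝ := min 1 (-C * γ / (‖d‖ ^ 2 + 1)) with ht0def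
  have hpos : 0 < -C * γ / (‖d‖ ^ 2 + 1) :=
    div_pos (mul_pos (neg_pos.2 hCneg) hγ) (by positivity)
  have ht0pos : 0 < t0 := lt_min one_pos hpos
  have hk := key t0 ht0pos (min_le_left _ _)
  have hb : t0 / (2 * γ) * ‖d‖ ^ 2 < -C := by
    have h1 : t0 ≤ -C * γ / (‖d‖ ^ 2 + 1) := min_le_right _ _
    have h2 : t0 / (2 * γ) * ‖d‖ ^ 2 ≤ (-C * γ / (‖d‖ ^ 2 + 1)) / (2 * γ) * ‖d‖ ^ 2 := by
      apply mul_le_mul_of_nonneg_right _ (sq_nonneg _)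
      apply div_le_div_of_nonneg_right h1 (by linarith)
    have h3 : (-C * γ / (‖d‖ ^ 2 + 1)) / (2 * γ) * ‖d‖ ^ 2 < -C := by
      rw [div_div, div_mul_eq_mul_div, div_lt_iff₀ (by positivity)]
      nlinarith [mul_pos (mul_pos (neg_pos.2 hCneg) hγ) (by positivity : (0:ℝ) < ‖d‖ ^ 2 + 2)]
    linarith
  linarith

lemma subgrad_mono (φ : E → ℝ) {x x' u u' : E}
    (h1 : IsSubgradient φ x u) (h2 : IsSubgradient φ x' u') :
    0 ≤ ⟪u - u', x - x'⟫ := by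
  have a := h1 x'
  have b := h2 x
  simp only [ge_iff_le, inner_sub_left, inner_sub_right] at a b ⊢
  linarith

lemma key_algebra {γ L : ℝ} (hγ : 0 < γ) (hL : 0 < L) (d a b Δ : E)
    (H1 : 0 ≤ ⟪d - a, a⟫) (H2 : 0 ≤ ⟪(2:ℝ) • a - d - γ • Δ - b, b⟫)
    (H3 : 1 / L * ‖Δ‖ ^ 2 ≤ ⟪Δ, a⟫) :
    ‖d - (a - b)‖ ^ 2 ≤ ‖d‖ ^ 2 - (2 - γ * L) / 2 * ‖a - b‖ ^ 2 := by
  set r := a - b with hr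
  have expand : ⟪d - a, a⟫ + ⟪(2:ℝ) • a - d - γ • Δ - b, b⟫
      = ⟪d, r⟫ - ‖r‖ ^ 2 - γ * ⟪Δ, a⟫ + γ * ⟪Δ, r⟫ := by
    rw [hr, ← real_inner_self_eq_norm_sq]
    simp only [inner_sub_left, inner_sub_right, real_inner_smul_left, real_inner_smul_right,
      two_smul, inner_add_left]
    rw [real_inner_comm b a]
    ring
  have key : ⟪d, r⟫ ≥ ‖r‖ ^ 2 + γ * ⟪Δ, a⟫ - γ * ⟪Δ, r⟫ := by
    have := add_nonneg H1 H2
    rw [expand] at this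
    linarith
  have hcs : ⟪Δ, r⟫ ≤ ‖Δ‖ * ‖r‖ := real_inner_le_norm _ _
  rw [norm_sub_sq_real]
  have hsq : 0 ≤ 2 * γ / L * (‖Δ‖ - L / 2 * ‖r‖) ^ 2 :=
    mul_nonneg (by positivity) (sq_nonneg _)
  have hLne : L ≠ 0 := hL.ne'
  have e1 : 2 * γ / L * (‖Δ‖ - L / 2 * ‖r‖) ^ 2
      = 2 * γ / L * ‖Δ‖ ^ 2 - 2 * γ * (‖Δ‖ * ‖r‖) + γ * L / 2 * ‖r‖ ^ 2 := by
    field_simp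
    ring
  rw [e1] at hsq
  have h3' : 2 * γ / L * ‖Δ‖ ^ 2 ≤ 2 * γ * ⟪Δ, a⟫ := by
    have := mul_le_mul_of_nonneg_left H3 (by positivity : (0:ℝ) ≤ 2 * γ)
    calc 2 * γ / L * ‖Δ‖ ^ 2 = 2 * γ * (1 / L * ‖Δ‖ ^ 2) := by ring
    _ ≤ 2 * γ * ⟪Δ, a⟫ := this
  have hcs' : 2 * γ * ⟪Δ, r⟫ ≤ 2 * γ * (‖Δ‖ * ‖r‖) :=
    mul_le_mul_of_nonneg_left hcs (by positivity)
  linarith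

lemma contraction {γ L : ℝ} (hγ : 0 < γ) (hL : 0 < L)
    (g h f : E → ℝ) (hg : ConvexOn ℝ Set.univ g) (hh : ConvexOn ℝ Set.univ h)
    (hf : ConvexOn ℝ Set.univ f) (hfL : LSmooth L f)
    {y x z y' x' z' : E}
    (hs : IsSplitStep γ g h f y x z) (hs' : IsSplitStep γ g h f y' x' z') :
    ‖(y - x + z) - (y' - x' + z')‖ ^ 2
      ≤ ‖y - y'‖ ^ 2 - (2 - γ * L) / 2 * ‖(x - z) - (x' - z')‖ ^ 2 := by
  set d := y - y' with hd
  set a := x - x' with ha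
  set b := z - z' with hb
  set Δ := gradient f x - gradient f x' with hΔ
  have m1 : 0 ≤ ⟪d - a, a⟫ := by
    have hm := subgrad_mono g (prox_subgrad hγ g hg hs.1) (prox_subgrad hγ g hg hs'.1)
    rw [← smul_sub] at hm
    rw [real_inner_smul_left] at hm
    have h0 := (mul_nonneg_iff_of_pos_left (inv_pos.2 hγ)).1 hm
    have e : y - x - (y' - x') = d - a := by rw [hd, ha]; module
    rwa [e] at h0
  have m2 : 0 ≤ ⟪(2:ℝ) • a - d - γ • Δ - b, b⟫ := by
    have hm := subgrad_mono h (prox_subgrad hγ h hh hs.2) (prox_subgrad hγ h hh hs'.2)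
    rw [← smul_sub] at hm
    rw [real_inner_smul_left] at hm
    have h0 := (mul_nonneg_iff_of_pos_left (inv_pos.2 hγ)).1 hm
    have e : (2:ℝ) • x - y - γ • gradient f x - z - ((2:ℝ) • x' - y' - γ • gradient f x' - z')
        = (2:ℝ) • a - d - γ • Δ - b := by rw [hd, ha, hb, hΔ]; module
    rwa [e] at h0
  have m3 : 1 / L * ‖Δ‖ ^ 2 ≤ ⟪Δ, a⟫ := cocoercive hL f hf hfL x x'
  have := key_algebra hγ hL d a b Δ m1 m2 m3
  have e1 : (y - x + z) - (y' - x' + z') = d - (a - b) := by rw [hd, ha, hb]; module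
  have e2 : (x - z) - (x' - z') = a - b := by rw [ha, hb]; module
  rw [e1, e2]
  exact this


/-- sublinear convergence of the three-operator splitting. -/
theorem stmt_4 (p : ℕ) (hp : 0 < p) (L : ℝ) (hL : 0 < L) (γ : ℝ)
    (hγ : 0 < γ) (hγ2 : γ < 2 / L)
    (g h f : EuclideanSpace ℝ (Fin p) → ℝ)
    (hg : ConvexOn ℝ Set.univ g) (hh : ConvexOn ℝ Set.univ h)
    (hf : ConvexOn ℝ Set.univ f) (hfL : LSmooth L f)
    (ystar xstar : EuclideanSpace ℝ (Fin p))
    (hfix₁ : IsProxPt γ g ystar xstar)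
    (hfix₂ : IsProxPt γ h ((2 : ℝ) • xstar - ystar - γ • gradient f xstar) xstar)
    (y x z : ℕ → EuclideanSpace ℝ (Fin p))
    (hstep : ∀ k, IsSplitStep γ g h f (y k) (x k) (z k))
    (hupdate : ∀ k, y (k + 1) = y k - x k + z k) :
    ∀ k : ℕ, ‖γ⁻¹ • (x k - z k)‖ ^ 2 ≤
      2 * ‖y 0 - ystar‖ ^ 2 / (γ ^ 2 * (2 - γ * L) * (k + 1)) := by
  have hγL : γ * L < 2 := by
    have := (lt_div_iff₀ hL).1 hγ2
    linarith
  set c : ℝ := (2 - γ * L) / 2 with hc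
  have hcpos : 0 < c := by rw [hc]; linarith
  have hstar : IsSplitStep γ g h f ystar xstar xstar := ⟨hfix₁, hfix₂⟩
  have hdec : ∀ k, ‖y (k + 1) - ystar‖ ^ 2 ≤ ‖y k - ystar‖ ^ 2 - c * ‖x k - z k‖ ^ 2 := by
    intro k
    have hcon := contraction hγ hL g h f hg hh hf hfL (hstep k) hstar
    have e1 : ystar - xstar + xstar = ystar := by module
    have e2 : x k - z k - (xstar - xstar) = x k - z k := by module
    rw [e1, e2, ← hupdate k] at hcon
    exact hcon
  have hmono : ∀ k, ‖x (k + 1) - z (k + 1)‖ ^ 2 ≤ ‖x k - z k‖ ^ 2 := by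
    intro k
    have hcon := contraction hγ hL g h f hg hh hf hfL (hstep (k + 1)) (hstep k)
    rw [← hupdate (k + 1), ← hupdate k] at hcon
    have e1 : y (k + 1 + 1) - y (k + 1) = z (k + 1) - x (k + 1) := by
      rw [hupdate (k + 1)]; module
    have e2 : y (k + 1) - y k = z k - x k := by rw [hupdate k]; module
    rw [e1, e2] at hcon
    have h1 : ‖z (k + 1) - x (k + 1)‖ ^ 2 ≤ ‖z k - x k‖ ^ 2 := by
      have : 0 ≤ (2 - γ * L) / 2 * ‖x (k + 1) - z (k + 1) - (x k - z k)‖ ^ 2 :=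
        mul_nonneg (by linarith) (sq_nonneg _)
      linarith
    rw [norm_sub_rev (z (k+1)) (x (k+1)), norm_sub_rev (z k) (x k)] at h1
    exact h1
  have hsum : ∀ k : ℕ, ((k : ℝ) + 1) * (c * ‖x k - z k‖ ^ 2)
      ≤ ‖y 0 - ystar‖ ^ 2 - ‖y (k + 1) - ystar‖ ^ 2 := by
    intro k
    induction k with
    | zero =>
      have := hdec 0
      push_cast
      linarith
    | succ n ih =>
      have h1 := hdec (n + 1)
      have h2 := hmono n
      have h3 : ((n : ℝ) + 1) * (c * ‖x (n + 1) - z (n + 1)‖ ^ 2)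
          ≤ ((n : ℝ) + 1) * (c * ‖x n - z n‖ ^ 2) := by
        apply mul_le_mul_of_nonneg_left _ (by positivity)
        exact mul_le_mul_of_nonneg_left h2 hcpos.le
      push_cast
      nlinarith [h1, h2, h3, ih]
  intro k
  have hb : ((k : ℝ) + 1) * (c * ‖x k - z k‖ ^ 2) ≤ ‖y 0 - ystar‖ ^ 2 := by
    have := hsum k
    nlinarith [sq_nonneg ‖y (k + 1) - ystar‖]
  have hdenpos : 0 < γ ^ 2 * (2 - γ * L) * ((k : ℝ) + 1) :=
    mul_pos (mul_pos (pow_pos hγ 2) (by linarith)) (by positivity)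
  rw [le_div_iff₀ hdenpos]
  have enorm : ‖γ⁻¹ • (x k - z k)‖ = γ⁻¹ * ‖x k - z k‖ := by
    rw [norm_smul, Real.norm_eq_abs, abs_inv, abs_of_pos hγ]
  rw [enorm]
  have e : (γ⁻¹ * ‖x k - z k‖) ^ 2 * (γ ^ 2 * (2 - γ * L) * ((k : ℝ) + 1))
      = 2 * (((k : ℝ) + 1) * (c * ‖x k - z k‖ ^ 2)) := by
    rw [hc]
    field_simp
  rw [e]
  linarith
end

section
/- Let p be a positive integer and let f : ℝ^p → ℝ be convex and L-smooth with L > 0. Then for all x, x̃, d ∈ ℝ^p, ⟨∇f(x) − ∇f(x̃), d − (x − x̃)⟩ ≤ (L/4)·‖d‖². -/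
open RealInnerProductSpace

variable {p : ℕ}

private lemma aux_hasDerivAt_line (f : EuclideanSpace ℝ (Fin p) → ℝ)
    (hfd : Differentiable ℝ f) (x v : EuclideanSpace ℝ (Fin p)) (t : ℝ) :
    HasDerivAt (fun s : ℝ => f (x + s • v)) ⟪gradient f (x + t • v), v⟫ t := by
  have h1 : HasDerivAt (fun s : ℝ => x + s • v) v t := by
    simpa using ((hasDerivAt_id t).smul_const v).const_add x
  have h2 := ((hfd (x + t • v)).hasGradientAt).hasFDerivAt
  have h3 := h2.comp_hasDerivAt t h1
  simpa [InnerProductSpace.toDual_apply_apply, Function.comp_def] using h3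

private lemma aux_descent (L : ℝ) (hL : 0 < L) (f : EuclideanSpace ℝ (Fin p) → ℝ)
    (hfd : Differentiable ℝ f)
    (hlip : ∀ a b : EuclideanSpace ℝ (Fin p), ‖gradient f a - gradient f b‖ ≤ L * ‖a - b‖)
    (x y : EuclideanSpace ℝ (Fin p)) :
    f y ≤ f x + ⟪gradient f x, y - x⟫ + L / 2 * ‖y - x‖ ^ 2 := by
  set v := y - x with hv
  have hgc : Continuous (gradient f) := by
    have : LipschitzWith (Real.toNNReal L) (gradient f) := by
      apply LipschitzWith.of_dist_le_mul
      intro a b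
      simpa [dist_eq_norm, Real.coe_toNNReal L hL.le] using hlip a b
    exact this.continuous
  have hGc : Continuous (fun t : ℝ => ⟪gradient f (x + t • v), v⟫) := by
    exact (hgc.comp (by continuity)).inner continuous_const
  have key : (∫ t in (0:ℝ)..1, ⟪gradient f (x + t • v), v⟫) = f y - f x := by
    have := intervalIntegral.integral_eq_sub_of_hasDerivAt
      (f := fun s : ℝ => f (x + s • v))
      (f' := fun t : ℝ => ⟪gradient f (x + t • v), v⟫)
      (a := 0) (b := 1)
      (fun t _ => aux_hasDerivAt_line f hfd x v t)
      (hGc.intervalIntegrable 0 1)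
    simp only [one_smul, zero_smul, add_zero] at this
    rw [this, hv]
    simp [add_sub_cancel]
  have hbound : ∀ t ∈ Set.Icc (0:ℝ) 1,
      ⟪gradient f (x + t • v), v⟫ ≤ ⟪gradient f x, v⟫ + L * ‖v‖ ^ 2 * t := by
    intro t ht
    have h1 : ⟪gradient f (x + t • v) - gradient f x, v⟫
        ≤ ‖gradient f (x + t • v) - gradient f x‖ * ‖v‖ := real_inner_le_norm _ _
    have h2 : ‖gradient f (x + t • v) - gradient f x‖ ≤ L * (t * ‖v‖) := by
      have := hlip (x + t • v) x
      simpa [norm_smul, abs_of_nonneg ht.1] using this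
    have h3 : ⟪gradient f (x + t • v) - gradient f x, v⟫ ≤ L * (t * ‖v‖) * ‖v‖ :=
      h1.trans (by
        apply mul_le_mul_of_nonneg_right h2 (norm_nonneg v))
    rw [inner_sub_left] at h3
    nlinarith [norm_nonneg v]
  have hint : (∫ t in (0:ℝ)..1, ⟪gradient f (x + t • v), v⟫)
      ≤ ∫ t in (0:ℝ)..1, (⟪gradient f x, v⟫ + L * ‖v‖ ^ 2 * t) := by
    apply intervalIntegral.integral_mono_on zero_le_one
      (hGc.intervalIntegrable 0 1)
      ((continuous_const.add (continuous_const.mul continuous_id)).intervalIntegrable 0 1)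
      hbound
  have hval : (∫ t in (0:ℝ)..1, (⟪gradient f x, v⟫ + L * ‖v‖ ^ 2 * t))
      = ⟪gradient f x, v⟫ + L / 2 * ‖v‖ ^ 2 := by
    have h2 : IntervalIntegrable (fun t : ℝ => L * ‖v‖ ^ 2 * t) MeasureTheory.volume 0 1 :=
      IntervalIntegrable.const_mul intervalIntegral.intervalIntegrable_id _
    rw [intervalIntegral.integral_add intervalIntegrable_const h2,
      intervalIntegral.integral_const, intervalIntegral.integral_const_mul, integral_id]
    norm_num
    ring
  rw [key] at hint
  rw [hval] at hint
  linarith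

private lemma aux_grad_ineq (f : EuclideanSpace ℝ (Fin p) → ℝ)
    (hf : ConvexOn ℝ Set.univ f) (hfd : Differentiable ℝ f)
    (z w : EuclideanSpace ℝ (Fin p)) :
    f z + ⟪gradient f z, w - z⟫ ≤ f w := by
  set v := w - z with hv
  have hφ : ConvexOn ℝ Set.univ (fun t : ℝ => f (z + t • v)) := by
    have := hf.comp_affineMap (AffineMap.lineMap z w : ℝ →ᵃ[ℝ] EuclideanSpace ℝ (Fin p))
    have heq : (f ∘ (AffineMap.lineMap z w : ℝ →ᵃ[ℝ] EuclideanSpace ℝ (Fin p)))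
        = fun t : ℝ => f (z + t • v) := by
      funext t
      simp [AffineMap.lineMap_apply, hv]
      congr 1
      module
    rw [heq] at this
    simpa using this
  have hder : HasDerivAt (fun t : ℝ => f (z + t • v)) ⟪gradient f z, v⟫ 0 := by
    have := aux_hasDerivAt_line f hfd z v 0
    simpa using this
  have := hφ.le_slope_of_hasDerivAt (Set.mem_univ (0:ℝ)) (Set.mem_univ (1:ℝ)) zero_lt_one hder
  rw [slope_def_field] at this
  simp only [one_smul, zero_smul, add_zero, sub_zero, div_one] at this
  -- this : ⟪gradient f z, v⟫ ≤ f (z + v) - f z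
  have hzv : z + v = w := by rw [hv]; abel
  rw [hzv] at this
  linarith

private lemma aux_key (L : ℝ) (hL : 0 < L) (f : EuclideanSpace ℝ (Fin p) → ℝ)
    (hf : ConvexOn ℝ Set.univ f) (hfd : Differentiable ℝ f)
    (hlip : ∀ a b : EuclideanSpace ℝ (Fin p), ‖gradient f a - gradient f b‖ ≤ L * ‖a - b‖)
    (x xt : EuclideanSpace ℝ (Fin p)) :
    f x + ⟪gradient f x, xt - x⟫ + 1 / (2 * L) * ‖gradient f x - gradient f xt‖ ^ 2 ≤ f xt := by
  set g := gradient f x - gradient f xt with hg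
  have h1 := aux_descent L hL f hfd hlip xt (xt + L⁻¹ • g)
  have h2 := aux_grad_ineq f hf hfd x (xt + L⁻¹ • g)
  have e1 : xt + L⁻¹ • g - xt = L⁻¹ • g := by abel
  rw [e1] at h1
  have e2 : ⟪gradient f xt, L⁻¹ • g⟫ = L⁻¹ * ⟪gradient f xt, g⟫ := real_inner_smul_right _ _ _
  have e3 : ‖L⁻¹ • g‖ ^ 2 = L⁻¹ ^ 2 * ‖g‖ ^ 2 := by
    rw [norm_smul]
    simp [abs_of_nonneg (inv_nonneg.mpr hL.le), mul_pow]
  rw [e2, e3] at h1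
  have e4 : ⟪gradient f x, xt + L⁻¹ • g - x⟫
      = ⟪gradient f x, xt - x⟫ + L⁻¹ * ⟪gradient f x, g⟫ := by
    have : xt + L⁻¹ • g - x = (xt - x) + L⁻¹ • g := by abel
    rw [this, inner_add_right, real_inner_smul_right]
  rw [e4] at h2
  have e5 : ⟪gradient f x, g⟫ - ⟪gradient f xt, g⟫ = ‖g‖ ^ 2 := by
    rw [← inner_sub_left, ← hg, real_inner_self_eq_norm_sq]
  have hfield2 : 1 / (2 * L) * ‖g‖ ^ 2
      = L⁻¹ * ‖g‖ ^ 2 - L / 2 * (L⁻¹ ^ 2 * ‖g‖ ^ 2) := by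
    field_simp
    ring
  have e6 : L⁻¹ * ⟪gradient f x, g⟫ - L⁻¹ * ⟪gradient f xt, g⟫ = L⁻¹ * ‖g‖ ^ 2 := by
    rw [← mul_sub, e5]
  linarith [h1, h2, e6, hfield2]

private lemma aux_coco (L : ℝ) (hL : 0 < L) (f : EuclideanSpace ℝ (Fin p) → ℝ)
    (hf : ConvexOn ℝ Set.univ f) (hfd : Differentiable ℝ f)
    (hlip : ∀ a b : EuclideanSpace ℝ (Fin p), ‖gradient f a - gradient f b‖ ≤ L * ‖a - b‖)
    (x xt : EuclideanSpace ℝ (Fin p)) :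
    1 / L * ‖gradient f x - gradient f xt‖ ^ 2 ≤ ⟪gradient f x - gradient f xt, x - xt⟫ := by
  have h1 := aux_key L hL f hf hfd hlip x xt
  have h2 := aux_key L hL f hf hfd hlip xt x
  have e0 : ‖gradient f xt - gradient f x‖ = ‖gradient f x - gradient f xt‖ := by
    rw [← norm_neg]; congr 1; abel
  rw [e0] at h2
  have e1 : ⟪gradient f x - gradient f xt, x - xt⟫
      = ⟪gradient f x, x - xt⟫ - ⟪gradient f xt, x - xt⟫ := inner_sub_left _ _ _
  have e2 : ⟪gradient f x, xt - x⟫ = -⟪gradient f x, x - xt⟫ := by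
    rw [← inner_neg_right]; congr 1; abel
  rw [e2] at h1
  have hfield : (1:ℝ) / L = 1 / (2*L) + 1 / (2*L) := by field_simp; ring
  nlinarith [h1, h2]

/-- a consequence of co-coercivity for L-smooth convex functions. -/
theorem stmt_6 (p : ℕ) (hp : 0 < p) (L : ℝ) (hL : 0 < L)
    (f : EuclideanSpace ℝ (Fin p) → ℝ)
    (hf : ConvexOn ℝ Set.univ f) (hfL : LSmooth L f) :
    ∀ x xt d : EuclideanSpace ℝ (Fin p),
      ⟪gradient f x - gradient f xt, d - (x - xt)⟫ ≤ (L / 4) * ‖d‖ ^ 2 := by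
  intro x xt d
  set g := gradient f x - gradient f xt with hg
  have hco := aux_coco L hL f hf hfL.1 hfL.2 x xt
  rw [← hg] at hco
  have hcs : ⟪g, d⟫ ≤ ‖g‖ * ‖d‖ := real_inner_le_norm _ _
  have hsq : ‖g‖ ^ 2 ≤ L * ⟪g, x - xt⟫ := by
    have h := mul_le_mul_of_nonneg_left hco hL.le
    calc ‖g‖ ^ 2 = L * (1 / L * ‖g‖ ^ 2) := by field_simp
    _ ≤ L * ⟪g, x - xt⟫ := h
  rw [inner_sub_right]
  nlinarith [sq_nonneg (2 * ‖g‖ - L * ‖d‖), hL, hcs, hsq, norm_nonneg g, norm_nonneg d]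
end

section
/- Let p be a positive integer, γ > 0, and let g, h : ℝ^p → ℝ be convex. Let y, ỹ ∈ ℝ^p, let x be a proximal point of g at y with parameter γ and z a proximal point of h at 2x − y with parameter γ; similarly let x̃ be a proximal point of g at ỹ with parameter γ and z̃ a proximal point of h at 2x̃ − ỹ with parameter γ. Then ⟨(x − z) − (x̃ − z̃), y − ỹ⟩ ≥ ‖(x − z) − (x̃ − z̃)‖²; that is, when f = 0 the gradient mapping y ↦ (x − z)/γ of the three-operator splitting (i.e., the Douglas–Rachford case) is firmly nonexpansive. -/
open RealInnerProductSpace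

lemma prox_subgrad_s9 {p : ℕ} {γ : ℝ} (hγ : 0 < γ)
    {φ : EuclideanSpace ℝ (Fin p) → ℝ} (hφ : ConvexOn ℝ Set.univ φ)
    {y x : EuclideanSpace ℝ (Fin p)}
    (hx : ∀ u : EuclideanSpace ℝ (Fin p),
      φ x + (1 / (2 * γ)) * ‖x - y‖ ^ 2 ≤ φ u + (1 / (2 * γ)) * ‖u - y‖ ^ 2)
    (w : EuclideanSpace ℝ (Fin p)) :
    φ x + (1 / γ) * ⟪y - x, w - x⟫ ≤ φ w := by
  by_contra hlt
  push_neg at hlt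
  set c : ℝ := 1 / (2 * γ) with hc
  have hcpos : 0 < c := by positivity
  set A : ℝ := ⟪x - y, w - x⟫ with hA
  set B : ℝ := ‖w - x‖ ^ 2 with hB
  have hBnn : 0 ≤ B := by positivity
  have hAeq : ⟪y - x, w - x⟫ = -A := by
    rw [hA, ← inner_neg_left]; congr 1; abel
  have hD : φ w - φ x + 2 * c * A < 0 := by
    have h2c : 2 * c = 1 / γ := by rw [hc]; field_simp
    rw [hAeq, ← h2c] at hlt; linarith
  set D : ℝ := φ w - φ x + 2 * c * A with hDdef
  set t : ℝ := min 1 ((-D) / (c * B + 1)) with ht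
  have htpos : 0 < t := by
    apply lt_min one_pos
    apply div_pos (by linarith) (by positivity)
  have ht1 : t ≤ 1 := min_le_left _ _
  have htB : c * t * B < -D := by
    have h2 : t ≤ (-D) / (c * B + 1) := min_le_right _ _
    have h3 : c * t * B ≤ c * B * ((-D) / (c * B + 1)) := by
      rcases eq_or_lt_of_le hBnn with hB0 | hB0
      · rw [← hB0]; simp
      · nlinarith [mul_le_mul_of_nonneg_left h2 (mul_pos hcpos hB0).le]
    have hfrac : c * B / (c * B + 1) < 1 :=
      (div_lt_one (by positivity)).mpr (by linarith [mul_nonneg hcpos.le hBnn])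
    have h4 : c * B * ((-D) / (c * B + 1)) < -D := by
      have := mul_lt_of_lt_one_left (by linarith : (0:ℝ) < -D) hfrac
      calc c * B * ((-D) / (c * B + 1)) = c * B / (c * B + 1) * (-D) := by ring
        _ < -D := this
    linarith
  -- convexity
  have hconv : φ (x + t • (w - x)) ≤ (1 - t) * φ x + t * φ w := by
    have := hφ.2 (Set.mem_univ x) (Set.mem_univ w) (by linarith : (0:ℝ) ≤ 1 - t)
      (le_of_lt htpos) (by ring)
    have heq : (1 - t) • x + t • w = x + t • (w - x) := by module
    rwa [heq] at this
  have hprox := hx (x + t • (w - x))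
  have hnorm : ‖x + t • (w - x) - y‖ ^ 2 = ‖x - y‖ ^ 2 + 2 * (t * A) + t ^ 2 * B := by
    have : x + t • (w - x) - y = (x - y) + t • (w - x) := by abel
    rw [this, norm_add_sq_real, real_inner_smul_right, norm_smul]
    simp only [hA, hB, Real.norm_eq_abs, mul_pow, sq_abs]
  rw [hnorm] at hprox
  nlinarith [hprox, hconv, htpos, htB]

lemma prox_mono {p : ℕ} {γ : ℝ} (hγ : 0 < γ)
    {φ : EuclideanSpace ℝ (Fin p) → ℝ} (hφ : ConvexOn ℝ Set.univ φ)
    {y x yt xt : EuclideanSpace ℝ (Fin p)}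
    (hx : ∀ u : EuclideanSpace ℝ (Fin p),
      φ x + (1 / (2 * γ)) * ‖x - y‖ ^ 2 ≤ φ u + (1 / (2 * γ)) * ‖u - y‖ ^ 2)
    (hxt : ∀ u : EuclideanSpace ℝ (Fin p),
      φ xt + (1 / (2 * γ)) * ‖xt - yt‖ ^ 2 ≤ φ u + (1 / (2 * γ)) * ‖u - yt‖ ^ 2) :
    0 ≤ ⟪(y - x) - (yt - xt), x - xt⟫ := by
  have h1 := prox_subgrad_s9 hγ hφ hx xt
  have h2 := prox_subgrad_s9 hγ hφ hxt x
  have hγ' : (0:ℝ) < 1 / γ := by positivity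
  have key : 0 ≤ ⟪y - x, x - xt⟫ + ⟪yt - xt, xt - x⟫ := by
    have hflip : ⟪y - x, xt - x⟫ = -⟪y - x, x - xt⟫ := by
      rw [← inner_neg_right]; congr 1; abel
    have hflip2 : ⟪yt - xt, x - xt⟫ = -⟪yt - xt, xt - x⟫ := by
      rw [← inner_neg_right]; congr 1; abel
    rw [hflip] at h1
    rw [hflip2] at h2
    nlinarith [h1, h2]
  have e1 : ⟪(y - x) - (yt - xt), x - xt⟫ = ⟪y - x, x - xt⟫ + ⟪yt - xt, xt - x⟫ := by
    rw [inner_sub_left]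
    have : ⟪yt - xt, xt - x⟫ = -⟪yt - xt, x - xt⟫ := by
      rw [← inner_neg_right]; congr 1; abel
    rw [this]; ring
  linarith [key, e1.ge, e1.le]

/-- firm nonexpansiveness in the Douglas–Rachford case (f = 0). -/
theorem stmt_9 (p : ℕ) (hp : 0 < p) (γ : ℝ) (hγ : 0 < γ)
    (g h : EuclideanSpace ℝ (Fin p) → ℝ)
    (hg : ConvexOn ℝ Set.univ g) (hh : ConvexOn ℝ Set.univ h)
    (y yt x z xt zt : EuclideanSpace ℝ (Fin p))
    (hx : IsProxPt γ g y x) (hz : IsProxPt γ h ((2 : ℝ) • x - y) z)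
    (hxt : IsProxPt γ g yt xt) (hzt : IsProxPt γ h ((2 : ℝ) • xt - yt) zt) :
    ⟪(x - z) - (xt - zt), y - yt⟫ ≥ ‖(x - z) - (xt - zt)‖ ^ 2 := by
  have h1 := prox_mono hγ hg hx hxt
  have h2 := prox_mono hγ hh hz hzt
  set a := x - xt with ha
  set b := z - zt with hb
  set d := y - yt with hd
  have e1 : (y - x) - (yt - xt) = d - a := by rw [ha, hd]; abel
  have e2 : ((2:ℝ) • x - y - z) - ((2:ℝ) • xt - yt - zt) = (2:ℝ) • a - d - b := by
    rw [ha, hb, hd]; module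
  have e3 : (x - z) - (xt - zt) = a - b := by rw [ha, hb]; abel
  rw [e1] at h1
  rw [e2] at h2
  rw [e3, ← real_inner_self_eq_norm_sq]
  have c1 := real_inner_comm a b
  have c2 := real_inner_comm a d
  have c3 := real_inner_comm b d
  simp only [inner_sub_left, inner_sub_right, real_inner_smul_left,
    real_inner_smul_right] at h1 h2 ⊢
  linarith
end
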